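/- For an (n,b,σ)-permutiple with carries c_j, each carry is determined by the digits via c_j = (1/(b^{k+1} − 1)) · Σ_{ℓ=0}^{k} (n·d_{σψ^ℓ(j)} − d_{ψ^ℓ(j)})·b^ℓ, where ψ is the (k+1)-cycle (0,1,...,k) acting mod k+1. -/

import Mathlib

open Fin.NatCast

/-- Theorem 4, second formula: the carries of an (n,b,σ)-permutiple are determined
by the digits via (b^{k+1} − 1)·c_j = Σ_{ℓ=0}^{k} (n·d_{σψ^ℓ(j)} − d_{ψ^ℓ(j)})·b^ℓ,
where ψ is the (k+1)-cycle j ↦ j+1 mod (k+1). -/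
theorem stmt_5 (n b k : ℕ) (hn : 1 < n) (hnb : n < b)
    (σ : Equiv.Perm (Fin (k + 1))) (d : Fin (k + 1) → ℕ) (hd : ∀ j, d j < b)
    (c : Fin (k + 1) → ℕ) (hc0 : c 0 = 0) (hcb : ∀ j, c j ≤ n - 1)
    (hrel : ∀ j : Fin (k + 1), (b : ℤ) * c (j + 1) - c j = n * d (σ j) - d j) :
    ∀ j : Fin (k + 1),
      ((b : ℤ) ^ (k + 1) - 1) * c j
        = ∑ ℓ ∈ Finset.range (k + 1),
            ((n : ℤ) * d (σ (j + (ℓ : Fin (k + 1)))) - d (j + (ℓ : Fin (k + 1))))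
              * b ^ ℓ := by
  intro j
  have key : ∀ ℓ : ℕ,
      ((n : ℤ) * d (σ (j + (ℓ : Fin (k + 1)))) - d (j + (ℓ : Fin (k + 1)))) * b ^ ℓ
        = (b : ℤ) ^ (ℓ + 1) * c (j + ((ℓ + 1 : ℕ) : Fin (k + 1)))
            - (b : ℤ) ^ ℓ * c (j + (ℓ : Fin (k + 1))) := by
    intro ℓ
    have hcast : ((ℓ + 1 : ℕ) : Fin (k + 1)) = (ℓ : Fin (k + 1)) + 1 := by
      push_cast; ring
    rw [hcast, ← add_assoc]
    have h := hrel (j + (ℓ : Fin (k + 1)))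
    rw [← h]; ring
  rw [Finset.sum_congr rfl fun ℓ _ => key ℓ,
    Finset.sum_range_sub (f := fun ℓ : ℕ => (b : ℤ) ^ ℓ * c (j + (ℓ : Fin (k + 1))))]
  have h1 : ((k + 1 : ℕ) : Fin (k + 1)) = 0 := Fin.natCast_self _
  have h0 : ((0 : ℕ) : Fin (k + 1)) = 0 := rfl
  rw [h1, h0]
  ring
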